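/- Let X be a topological space with metrizable compacts, J : X → [0,∞] coercive and lower semicontinuous, Λ its dual functional, D ⊆ C_b(X) bounded above by M₂ and isolating points, and x ∈ X with J(x) < ∞. Let K be the compact set {y : J(y) ≤ J(x) + M₂ + 2}, with metric d. Then there exist functions f_m ∈ D, m ≥ 1, such that |f_m(x)| ≤ 1/m, sup_{y∈K} f_m(y) ≤ 0, sup_{y ∈ K, d(y,x) ≥ 1/m} f_m(y) ≤ −m, and Λ(f_m) → −J(x) as m → ∞. -/

import Mathlib

open Filter Topology

/-- Given a coercive lower semicontinuous `J`, a family `D` bounded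
above by `M₂` that isolates points, a point `x` with `J x < ∞`, and the compact set
`K = {y | J y ≤ J x + M₂ + 2}` with a compatible metric `d` on it, there are
functions `f_m ∈ D` with `|f_m x| ≤ 1/m`, `f_m ≤ 0` on `K`, `f_m ≤ -m` on
`K ∩ {d(·,x) ≥ 1/m}`, and `Λ(f_m) → -J x`. -/
theorem isolating_functions_approximate {X : Type*} [TopologicalSpace X]
    (hmet : ∀ K : Set X, IsCompact K → TopologicalSpace.MetrizableSpace K)
    (J : X → EReal) (hJ0 : ∀ x, 0 ≤ J x)
    (hlsc : LowerSemicontinuous J)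
    (hcoer : ∀ M : ℝ, IsCompact {x | J x ≤ (M : EReal)})
    (D : Set (BoundedContinuousFunction X ℝ)) (M₂ : ℝ)
    (hbdd : ∀ f ∈ D, ∀ y : X, f y ≤ M₂)
    (hiso : ∀ (x : X) (m : ℝ), 0 < m → ∀ K : Set X, IsCompact K →
      ∀ U : Set X, IsOpen U → x ∈ U →
        ∃ f ∈ D, |f x| ≤ 1 / m ∧ (∀ y ∈ K, f y ≤ 0) ∧ ∀ y ∈ K \ U, f y ≤ -m)
    (x : X) (hx : J x ≠ ⊤)
    (K : Set X) (hKdef : K = {y | J y ≤ J x + (M₂ : EReal) + 2})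
    (hKcomp : IsCompact K) (hxK : x ∈ K)
    (d : X → X → ℝ)
    (hd_symm : ∀ y ∈ K, ∀ z ∈ K, d y z = d z y)
    (hd_eq : ∀ y ∈ K, ∀ z ∈ K, (d y z = 0 ↔ y = z))
    (hd_nonneg : ∀ y ∈ K, ∀ z ∈ K, 0 ≤ d y z)
    (hd_tri : ∀ y ∈ K, ∀ z ∈ K, ∀ w ∈ K, d y w ≤ d y z + d z w)
    (hd_cont : ContinuousOn (fun p : X × X => d p.1 p.2) (K ×ˢ K)) :
    ∃ f : ℕ → BoundedContinuousFunction X ℝ,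
      (∀ m : ℕ, 1 ≤ m →
        f m ∈ D ∧
        |f m x| ≤ 1 / (m : ℝ) ∧
        (∀ y ∈ K, f m y ≤ 0) ∧
        (∀ y ∈ K, 1 / (m : ℝ) ≤ d y x → f m y ≤ -(m : ℝ))) ∧
      Tendsto (fun m : ℕ => ⨆ y : X, ((f m y : EReal) - J y)) atTop (𝓝 (-(J x))) := by
  classical
  -- `r` is the real value of `J x`
  have hJxbot : J x ≠ ⊥ := by intro h; exact absurd (h ▸ hJ0 x) (by simp)
  set r : ℝ := (J x).toReal with hrdef
  have hr : (r : EReal) = J x := EReal.coe_toReal hx hJxbot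
  -- distance to x is continuous on K
  have hdx : ContinuousOn (fun y => d y x) K := by
    have : ContinuousOn (fun y : X => ((y, x) : X × X)) K :=
      (continuousOn_id.prodMk continuousOn_const)
    exact hd_cont.comp this (fun y hy => Set.mk_mem_prod hy hxK)
  have hdxx : d x x = 0 := (hd_eq x hxK x hxK).2 rfl
  -- key existence for each m ≥ 1
  have key : ∀ m : ℕ, 1 ≤ m → ∃ f, f ∈ D ∧ |f x| ≤ 1 / (m : ℝ) ∧
      (∀ y ∈ K, f y ≤ 0) ∧ (∀ y ∈ K, 1 / (m : ℝ) ≤ d y x → f y ≤ -(m : ℝ)) := by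
    intro m hm
    have hmpos : (0 : ℝ) < m := by exact_mod_cast hm
    obtain ⟨U, hUopen, hxU, hUsub⟩ :=
      (continuousOn_iff.1 hdx) x hxK (Set.Iio (1 / (m : ℝ))) isOpen_Iio
        (by simpa [hdxx] using one_div_pos.2 hmpos)
    obtain ⟨f, hfD, hfx, hfK, hfU⟩ := hiso x m hmpos K hKcomp U hUopen hxU
    refine ⟨f, hfD, hfx, hfK, fun y hy hdy => ?_⟩
    refine hfU y ⟨hy, fun hyU => ?_⟩
    have : d y x < 1 / (m : ℝ) := hUsub ⟨hyU, hy⟩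
    linarith
  choose f0 hf0 using key
  set f : ℕ → BoundedContinuousFunction X ℝ :=
    fun m => if h : 1 ≤ m then f0 m h else 0 with hfdef
  have hfprop : ∀ m : ℕ, 1 ≤ m →
      f m ∈ D ∧ |f m x| ≤ 1 / (m : ℝ) ∧ (∀ y ∈ K, f m y ≤ 0) ∧
      (∀ y ∈ K, 1 / (m : ℝ) ≤ d y x → f m y ≤ -(m : ℝ)) := by
    intro m hm
    simp only [hfdef, dif_pos hm]
    exact hf0 m hm
  refine ⟨f, hfprop, ?_⟩
  set S : ℕ → EReal := fun m => ⨆ y : X, ((f m y : EReal) - J y) with hSdef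
  -- lower bound
  have hlow : ∀ m : ℕ, 1 ≤ m → ((-(1 / (m : ℝ)) - r : ℝ) : EReal) ≤ S m := by
    intro m hm
    have h1 : ((f m x : EReal) - J x) ≤ S m := le_iSup (fun y => ((f m y : EReal) - J y)) x
    refine le_trans ?_ h1
    rw [← hr, ← EReal.coe_sub, EReal.coe_le_coe_iff]
    have := (abs_le.1 (hfprop m hm).2.1).1
    linarith
  -- upper bound
  have hup : ∀ ε : ℝ, 0 < ε → ∀ᶠ m : ℕ in atTop, S m ≤ ((ε - r : ℝ) : EReal) := by
    intro ε hε
    -- open set from lower semicontinuity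
    have hlt : ((r - ε : ℝ) : EReal) < J x := by
      rw [← hr]; exact_mod_cast sub_lt_self r hε
    obtain ⟨O, hOsub, hOopen, hxO⟩ := eventually_nhds_iff.1 (hlsc x _ hlt)
    -- δ > 0 below which membership in K forces membership in O
    obtain ⟨δ, hδpos, hδ⟩ : ∃ δ : ℝ, 0 < δ ∧ ∀ y ∈ K \ O, δ ≤ d y x := by
      rcases (K \ O).eq_empty_or_nonempty with he | hne
      · exact ⟨1, one_pos, fun y hy => absurd hy (by simp [he])⟩
      · have hcomp : IsCompact (K \ O) := hKcomp.diff hOopen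
        obtain ⟨y₀, hy₀, hmin⟩ := hcomp.exists_isMinOn hne
          (hdx.mono Set.diff_subset)
        refine ⟨d y₀ x, ?_, fun y hy => hmin hy⟩
        rcases lt_or_eq_of_le (hd_nonneg y₀ hy₀.1 x hxK) with h | h
        · exact h
        · exact absurd ((hd_eq y₀ hy₀.1 x hxK).1 h.symm) (by rintro rfl; exact hy₀.2 hxO)
    have h1 : ∀ᶠ m : ℕ in atTop, 1 / (m : ℝ) < δ :=
      (tendsto_one_div_atTop_nhds_zero_nat.eventually (eventually_lt_nhds hδpos))
    filter_upwards [h1, eventually_ge_atTop 1,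
      (tendsto_natCast_atTop_atTop (R := ℝ)).eventually_ge_atTop (r - ε)] with m hm1 hm2 hm3
    refine iSup_le fun y => ?_
    by_cases hyK : y ∈ K
    · by_cases hdy : 1 / (m : ℝ) ≤ d y x
      · -- far from x: f m y ≤ -m
        have hf := (hfprop m hm2).2.2.2 y hyK hdy
        calc ((f m y : EReal) - J y) ≤ ((-(m : ℝ) : ℝ) : EReal) - 0 :=
              EReal.sub_le_sub (by exact_mod_cast hf) (hJ0 y)
          _ = ((-(m : ℝ) : ℝ) : EReal) := by rw [sub_zero]
          _ ≤ ((ε - r : ℝ) : EReal) := by exact_mod_cast (by linarith : -(m:ℝ) ≤ ε - r)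
      · -- close to x: y ∈ O
        have hyO : y ∈ O := by
          by_contra hyO
          have := hδ y ⟨hyK, hyO⟩
          push_neg at hdy
          linarith
        have hJy : ((r - ε : ℝ) : EReal) ≤ J y := le_of_lt (hOsub y hyO)
        have hf := (hfprop m hm2).2.2.1 y hyK
        calc ((f m y : EReal) - J y) ≤ (0 : EReal) - ((r - ε : ℝ) : EReal) :=
              EReal.sub_le_sub (by exact_mod_cast hf) hJy
          _ = ((ε - r : ℝ) : EReal) := by
              rw [show (0 : EReal) = ((0 : ℝ) : EReal) from rfl, ← EReal.coe_sub]
              norm_num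
    · -- outside K: J y is large
      have hJy : (J x + (M₂ : EReal) + 2) ≤ J y := le_of_lt (by simpa [hKdef] using hyK)
      have hJy' : (((r + M₂ + 2 : ℝ)) : EReal) ≤ J y := by
        refine le_trans (le_of_eq ?_) hJy
        rw [← hr]
        push_cast
        rfl
      have hf : (f m y : ℝ) ≤ M₂ := hbdd _ (hfprop m hm2).1 y
      calc ((f m y : EReal) - J y) ≤ ((M₂ : ℝ) : EReal) - (((r + M₂ + 2 : ℝ)) : EReal) :=
            EReal.sub_le_sub (by exact_mod_cast hf) hJy'
        _ = (((-r - 2 : ℝ)) : EReal) := by rw [← EReal.coe_sub]; norm_cast; ring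
        _ ≤ ((ε - r : ℝ) : EReal) := by exact_mod_cast (by linarith : (-r - 2 : ℝ) ≤ ε - r)
  -- conclude via order topology
  have hneg : -(J x) = ((-r : ℝ) : EReal) := by rw [← hr]; rfl
  rw [hneg, tendsto_order]
  constructor
  · intro c hc
    have htlow : Tendsto (fun m : ℕ => ((-(1 / (m : ℝ)) - r : ℝ) : EReal)) atTop
        (𝓝 ((-r : ℝ) : EReal)) := by
      rw [EReal.tendsto_coe]
      have := tendsto_one_div_atTop_nhds_zero_nat.neg.sub_const r
      simpa using this
    filter_upwards [htlow.eventually (eventually_gt_nhds hc), eventually_ge_atTop 1]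
      with m h1 h2
    exact lt_of_lt_of_le h1 (hlow m h2)
  · intro c hc
    obtain ⟨q, hq1, hq2⟩ := EReal.exists_between_coe_real hc
    have hq1' : -r < q := by exact_mod_cast hq1
    filter_upwards [hup (q + r) (by linarith)] with m hm
    refine lt_of_le_of_lt ?_ hq2
    convert hm using 2
    ring
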